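/- Any minimizer B̂ of B ↦ ‖Y − XB‖_nuclear/√n + λ₀‖B‖₁ with Σ̂ := (Y − XB̂)ᵀ(Y − XB̂)/n nonsingular satisfies the KKT conditions: Xᵀ(Y − XB̂)Σ̂^{-1/2}/n = λ₀ Ẑ, where Ẑ is a p×q matrix with all entries of absolute value at most 1 and Ẑ_{k,j} = sign(B̂_{k,j}) whenever B̂_{k,j} ≠ 0. -/

import Mathlib

open Matrix BigOperators

section
open scoped ComplexOrder

/-- The square root of a positive semidefinite matrix, as `Matrix.PosSemidef.sqrt` was defined
in Mathlib (Dec 2024); it has since been removed from Mathlib. -/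
noncomputable def Matrix.PosSemidef.sqrt {n : Type*} [Fintype n] [DecidableEq n] {𝕜 : Type*}
    [RCLike 𝕜] {A : Matrix n n 𝕜} (hA : A.PosSemidef) : Matrix n n 𝕜 :=
  hA.1.eigenvectorUnitary.1 * diagonal ((↑) ∘ (√·) ∘ hA.1.eigenvalues) *
    (star hA.1.eigenvectorUnitary : Matrix n n 𝕜)

end

/-- Nuclear norm `‖A‖_nuclear = trace((AᴴA)^{1/2})` of a real matrix. -/
noncomputable def nuclearNorm {n q : ℕ} (A : Matrix (Fin n) (Fin q) ℝ) : ℝ :=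
  (Matrix.posSemidef_conjTranspose_mul_self A).sqrt.trace

section
open scoped MatrixOrder

lemma Matrix.PosSemidef.sqrt_eq_cfcSqrt {q : ℕ} {A : Matrix (Fin q) (Fin q) ℝ}
    (hA : A.PosSemidef) : hA.sqrt = CFC.sqrt A := by
  rw [CFC.sqrt_eq_cfc, cfc_nnreal_eq_real _ A, hA.1.cfc_eq, Matrix.IsHermitian.cfc,
    Unitary.conjStarAlgAut_apply, Matrix.PosSemidef.sqrt]
  congr
  funext i
  simp
  rcases le_total 0 i with h | h
  · rw [max_eq_left h]
  · rw [max_eq_right h, Real.sqrt_zero, Real.sqrt_eq_zero_of_nonpos h]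

lemma Matrix.PosSemidef.posSemidef_sqrt {q : ℕ} {A : Matrix (Fin q) (Fin q) ℝ}
    (hA : A.PosSemidef) : hA.sqrt.PosSemidef := by
  rw [hA.sqrt_eq_cfcSqrt]
  exact (CFC.sqrt_nonneg A).posSemidef

lemma Matrix.PosSemidef.sqrt_mul_self {q : ℕ} {A : Matrix (Fin q) (Fin q) ℝ}
    (hA : A.PosSemidef) : hA.sqrt * hA.sqrt = A := by
  rw [hA.sqrt_eq_cfcSqrt]
  exact CFC.sqrt_mul_sqrt_self A hA.nonneg

lemma Matrix.PosSemidef.eq_sqrt_of_sq_eq {q : ℕ} {B A : Matrix (Fin q) (Fin q) ℝ}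
    (hB : B.PosSemidef) (hA : A.PosSemidef) (h : B ^ 2 = A) : B = hA.sqrt := by
  rw [hA.sqrt_eq_cfcSqrt, ← h, CFC.sqrt_sq B hB.nonneg]

end

lemma slope_le_zero {a d ε : ℝ} (hε : 0 < ε)
    (h : ∀ t : ℝ, 0 < t → t < ε → a ≤ d * t) : a ≤ 0 := by
  by_contra ha
  push_neg at ha
  have h1 := h (ε/2) (by linarith) (by linarith)
  have hd : 0 < d := by nlinarith
  have ht0 : 0 < min (ε/2) (a/(2*d)) := lt_min (by linarith) (by positivity)
  have h2 := h (min (ε/2) (a/(2*d))) ht0 (lt_of_le_of_lt (min_le_left _ _) (by linarith))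
  have h3 : d * min (ε/2) (a/(2*d)) ≤ d * (a/(2*d)) :=
    mul_le_mul_of_nonneg_left (min_le_right _ _) hd.le
  have h4 : d * (a/(2*d)) = a/2 := by field_simp
  linarith

lemma scalar_kkt {g1 d lam0 b : ℝ} (hlam0 : 0 < lam0)
    (key : ∀ t : ℝ, 0 ≤ -(t*g1) + t^2*d + lam0*(|b+t| - |b|)) :
    |g1| ≤ lam0 ∧ (b ≠ 0 → g1 = lam0 * Real.sign b) := by
  constructor
  · rw [abs_le]
    constructor
    · have h : ∀ u : ℝ, 0 < u → u < 1 → -g1 - lam0 ≤ d * u := by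
        intro u hu _
        have hk := key (-u)
        have habs : |b + -u| - |b| ≤ u := by
          have h2 := abs_add_le b (-u)
          rw [abs_neg, abs_of_pos hu] at h2
          linarith
        nlinarith
      linarith [slope_le_zero one_pos h]
    · have h : ∀ t : ℝ, 0 < t → t < 1 → g1 - lam0 ≤ d * t := by
        intro t ht _
        have hk := key t
        have habs : |b + t| - |b| ≤ t := by
          have h2 := abs_add_le b t
          rw [abs_of_pos ht] at h2
          linarith
        nlinarith
      linarith [slope_le_zero one_pos h]
  · intro hb
    have hsign : ∀ t : ℝ, |t| < |b| → |b + t| - |b| = Real.sign b * t := by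
      intro t ht
      rcases lt_or_gt_of_ne hb with hneg | hpos
      · rw [abs_of_neg hneg] at ht
        have h1 := abs_lt.mp ht
        rw [Real.sign_of_neg hneg, abs_of_neg (by linarith : b + t < 0), abs_of_neg hneg]
        ring
      · rw [abs_of_pos hpos] at ht
        have h1 := abs_lt.mp ht
        rw [Real.sign_of_pos hpos, abs_of_pos (by linarith : 0 < b + t), abs_of_pos hpos]
        ring
    have hbb : 0 < |b| := abs_pos.mpr hb
    have hub : ∀ t : ℝ, 0 < t → t < |b| → g1 - lam0 * Real.sign b ≤ d * t := by
      intro t ht h1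
      have hk := key t
      rw [hsign t (by rwa [abs_of_pos ht])] at hk
      nlinarith
    have hlb : ∀ u : ℝ, 0 < u → u < |b| → lam0 * Real.sign b - g1 ≤ d * u := by
      intro u hu h1
      have hk := key (-u)
      rw [hsign (-u) (by rwa [abs_neg, abs_of_pos hu])] at hk
      nlinarith
    linarith [slope_le_zero hbb hub, slope_le_zero hbb hlb]

lemma trace_tr_mul_self_nonneg {q : ℕ} (A : Matrix (Fin q) (Fin q) ℝ) :
    0 ≤ (Aᵀ * A).trace := by
  simp only [Matrix.trace, Matrix.diag, Matrix.mul_apply, Matrix.transpose_apply]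
  exact Finset.sum_nonneg fun i _ => Finset.sum_nonneg fun j _ => mul_self_nonneg _

lemma trace_mul_stdBasisMatrix {p q : ℕ} (A : Matrix (Fin q) (Fin p) ℝ) (k : Fin p) (j : Fin q) :
    (A * Matrix.single k j (1:ℝ)).trace = A j k := by
  simp [Matrix.trace, Matrix.diag, Matrix.mul_apply, Matrix.single,
    Matrix.of_apply, ite_and]

lemma matrix_smul_inv {q : ℕ} (c : ℝ) (hc : c ≠ 0) (A : Matrix (Fin q) (Fin q) ℝ)
    (hA : IsUnit A.det) : (c • A)⁻¹ = c⁻¹ • A⁻¹ := by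
  apply Matrix.inv_eq_right_inv
  rw [Matrix.smul_mul, Matrix.mul_smul, smul_smul, mul_inv_cancel₀ hc, one_smul,
    Matrix.mul_nonsing_inv _ hA]

lemma sqrt_congr {q : ℕ} {A B : Matrix (Fin q) (Fin q) ℝ} (h : A = B)
    (hA : A.PosSemidef) (hB : B.PosSemidef) : hA.sqrt = hB.sqrt := by
  subst h; rfl

lemma psd_smul {q : ℕ} {A : Matrix (Fin q) (Fin q) ℝ} (hA : A.PosSemidef) {c : ℝ}
    (hc : 0 ≤ c) : (c • A).PosSemidef := by
  exact hA.smul hc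

lemma trace_sqrt_le {q : ℕ} {T : Matrix (Fin q) (Fin q) ℝ} (hT : T.PosSemidef)
    (W : Matrix (Fin q) (Fin q) ℝ) (hW : Wᵀ = W) (hWdet : IsUnit W.det) :
    hT.sqrt.trace ≤ ((W⁻¹ * W⁻¹ * T).trace + (W * W).trace) / 2 := by
  set R := hT.sqrt with hRdef
  have hR : Rᵀ = R := by
    have := hT.posSemidef_sqrt.isHermitian
    rwa [Matrix.IsHermitian, Matrix.conjTranspose_eq_transpose_of_trivial] at this
  have hRR : R * R = T := hT.sqrt_mul_self
  have hWi : (W⁻¹)ᵀ = W⁻¹ := by rw [Matrix.transpose_nonsing_inv, hW]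
  set C := R * W⁻¹ - W with hCdef
  have hCt : Cᵀ = W⁻¹ * R - W := by
    rw [hCdef, Matrix.transpose_sub, Matrix.transpose_mul, hR, hWi, hW]
  have h0 : 0 ≤ (Cᵀ * C).trace := trace_tr_mul_self_nonneg C
  have expand : Cᵀ * C
      = W⁻¹ * (R * R) * W⁻¹ - W⁻¹ * R * W - W * (R * W⁻¹) + W * W := by
    rw [hCt, hCdef]; noncomm_ring
  have t1 : (W⁻¹ * (R * R) * W⁻¹).trace = (W⁻¹ * W⁻¹ * T).trace := by
    rw [hRR, Matrix.trace_mul_cycle]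
  have t2 : (W⁻¹ * R * W).trace = R.trace := by
    rw [Matrix.trace_mul_cycle, Matrix.mul_nonsing_inv _ hWdet, Matrix.one_mul]
  have t3 : (W * (R * W⁻¹)).trace = R.trace := by
    rw [← Matrix.mul_assoc, Matrix.trace_mul_cycle, Matrix.nonsing_inv_mul _ hWdet,
      Matrix.one_mul]
  rw [expand, Matrix.trace_add, Matrix.trace_sub, Matrix.trace_sub, t1, t2, t3] at h0
  linarith

lemma penalty_sum {p q : ℕ} (B : Matrix (Fin p) (Fin q) ℝ) (k : Fin p) (j : Fin q) (t : ℝ) :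
    ∑ k', ∑ j', |(B + t • Matrix.single k j (1:ℝ)) k' j'|
      = (∑ k', ∑ j', |B k' j'|) + (|B k j + t| - |B k j|) := by
  have h : ∀ k' j', |(B + t • Matrix.single k j (1:ℝ)) k' j'| - |B k' j'|
      = if k = k' ∧ j = j' then |B k j + t| - |B k j| else 0 := by
    intro k' j'
    by_cases h1 : k = k' ∧ j = j'
    · obtain ⟨rfl, rfl⟩ := h1
      simp [Matrix.add_apply, Matrix.smul_apply]
    · rw [if_neg h1]
      simp [Matrix.add_apply, Matrix.smul_apply, Matrix.single, Matrix.of_apply, h1]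
  have h2 : ∑ k', ∑ j', (|(B + t • Matrix.single k j (1:ℝ)) k' j'| - |B k' j'|)
      = |B k j + t| - |B k j| := by
    simp only [h, ite_and]
    simp [Finset.sum_ite_eq]
  simp_rw [Finset.sum_sub_distrib] at h2
  linarith

/-- KKT conditions for the multivariate square-root Lasso: any minimizer `B̂` of
`B ↦ ‖Y − XB‖_nuclear/√n + λ₀‖B‖₁` with `Σ̂ := (Y−XB̂)ᵀ(Y−XB̂)/n` nonsingular
(positive definite) satisfies `Xᵀ(Y−XB̂)Σ̂^{-1/2}/n = λ₀Ẑ` with `‖Ẑ‖_∞ ≤ 1` and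
`Ẑ_{k,j} = sign(B̂_{k,j})` whenever `B̂_{k,j} ≠ 0`. -/
theorem stmt_2 {n p q : ℕ} (X : Matrix (Fin n) (Fin p) ℝ)
    (Y : Matrix (Fin n) (Fin q) ℝ) (lam0 : ℝ) (hlam0 : 0 < lam0)
    (Bhat : Matrix (Fin p) (Fin q) ℝ)
    (hmin : ∀ B : Matrix (Fin p) (Fin q) ℝ,
      nuclearNorm (Y - X * Bhat) / Real.sqrt n + lam0 * ∑ k, ∑ j, |Bhat k j| ≤
      nuclearNorm (Y - X * B) / Real.sqrt n + lam0 * ∑ k, ∑ j, |B k j|)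
    (hSighat : ((1 / (n : ℝ)) • ((Y - X * Bhat)ᵀ * (Y - X * Bhat))).PosDef) :
    ∃ Zhat : Matrix (Fin p) (Fin q) ℝ,
      (∀ k j, |Zhat k j| ≤ 1) ∧
      (∀ k j, Bhat k j ≠ 0 → Zhat k j = Real.sign (Bhat k j)) ∧
      (1 / (n : ℝ)) • (Xᵀ * (Y - X * Bhat) * (hSighat.posSemidef.sqrt)⁻¹) =
        lam0 • Zhat := by
  rcases Nat.eq_zero_or_pos q with hq | hq
  · subst hq
    exact ⟨0, fun k j => j.elim0, fun k j => j.elim0, by ext k j; exact j.elim0⟩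
  have hn : (0:ℝ) < n := by
    rcases Nat.eq_zero_or_pos n with hn0 | hn0
    · exfalso
      subst hn0
      have hx : (fun _ : Fin q => (1:ℝ)) ≠ 0 := by
        intro h
        have := congrFun h ⟨0, hq⟩
        simp at this
      have h := hSighat.dotProduct_mulVec_pos hx
      simp at h
    · exact_mod_cast hn0
  have hnne : (n:ℝ) ≠ 0 := ne_of_gt hn
  set M : Matrix (Fin n) (Fin q) ℝ := Y - X * Bhat with hMdef
  set P := (Matrix.PosDef.posSemidef hSighat).sqrt with hPdef
  have hPP : P * P = (1/(n:ℝ)) • (Mᵀ * M) := (Matrix.PosDef.posSemidef hSighat).sqrt_mul_self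
  have hPpsd : P.PosSemidef := (Matrix.PosDef.posSemidef hSighat).posSemidef_sqrt
  have hPherm : Pᵀ = P := by
    have := hPpsd.isHermitian
    rwa [Matrix.IsHermitian, Matrix.conjTranspose_eq_transpose_of_trivial] at this
  have hdetSig : 0 < ((1/(n:ℝ)) • (Mᵀ * M)).det := hSighat.det_pos
  have hPdet : IsUnit P.det := by
    rw [isUnit_iff_ne_zero]
    intro h
    have h2 : P.det * P.det = ((1/(n:ℝ)) • (Mᵀ * M)).det := by rw [← Matrix.det_mul, hPP]
    rw [h, mul_zero] at h2
    linarith [hdetSig]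
  have hPit : (P⁻¹)ᵀ = P⁻¹ := by rw [Matrix.transpose_nonsing_inv, hPherm]
  set Q := hPpsd.sqrt with hQdef
  have hQQ : Q * Q = P := hPpsd.sqrt_mul_self
  have hQt : Qᵀ = Q := by
    have := hPpsd.posSemidef_sqrt.isHermitian
    rwa [Matrix.IsHermitian, Matrix.conjTranspose_eq_transpose_of_trivial] at this
  have hQdet : IsUnit Q.det := by
    rw [isUnit_iff_ne_zero]
    intro h
    have h2 : Q.det * Q.det = P.det := by rw [← Matrix.det_mul, hQQ]
    rw [h, mul_zero] at h2
    exact hPdet.ne_zero h2.symm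
  set s := Real.sqrt n with hsdef
  have hs : 0 < s := Real.sqrt_pos.mpr hn
  have hss : s * s = n := Real.mul_self_sqrt hn.le
  set c4 := Real.sqrt s with hc4def
  have hc4 : 0 < c4 := Real.sqrt_pos.mpr hs
  have hc44 : c4 * c4 = s := Real.mul_self_sqrt hs.le
  set W := c4 • Q with hWdef
  have hWt : Wᵀ = W := by rw [hWdef, Matrix.transpose_smul, hQt]
  have hWdet : IsUnit W.det := by
    rw [hWdef, Matrix.det_smul]
    exact (isUnit_iff_ne_zero.2 (pow_ne_zero _ (ne_of_gt hc4))).mul hQdet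
  have hWW : W * W = s • P := by
    rw [hWdef, Matrix.smul_mul, Matrix.mul_smul, smul_smul, hc44, hQQ]
  have hWiWi : W⁻¹ * W⁻¹ = s⁻¹ • P⁻¹ := by
    rw [hWdef, matrix_smul_inv c4 (ne_of_gt hc4) Q hQdet, Matrix.smul_mul, Matrix.mul_smul,
      smul_smul, ← Matrix.mul_inv_rev, hQQ, ← mul_inv, hc44]
  -- quadratic upper bound on the nuclear norm objective
  have hg : ∀ B : Matrix (Fin p) (Fin q) ℝ,
      nuclearNorm (Y - X * B) / s
        ≤ (P⁻¹ * ((Y - X * B)ᵀ * (Y - X * B))).trace / (2*(n:ℝ)) + P.trace / 2 := by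
    intro B
    have hcT : ((Y - X * B)ᴴ * (Y - X * B)) = ((Y - X * B)ᵀ * (Y - X * B)) := by
      rw [Matrix.conjTranspose_eq_transpose_of_trivial]
    have hTpsd : ((Y - X * B)ᵀ * (Y - X * B)).PosSemidef :=
      hcT ▸ Matrix.posSemidef_conjTranspose_mul_self _
    have hnuc : nuclearNorm (Y - X * B) = hTpsd.sqrt.trace :=
      congrArg Matrix.trace (sqrt_congr hcT _ hTpsd)
    have key := trace_sqrt_le hTpsd W hWt hWdet
    rw [hWiWi, hWW, Matrix.smul_mul, Matrix.trace_smul, Matrix.trace_smul, smul_eq_mul,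
      smul_eq_mul] at key
    rw [hnuc, div_le_iff₀ hs]
    have heq2 : (s⁻¹ * (P⁻¹ * ((Y - X * B)ᵀ * (Y - X * B))).trace + s * P.trace) / 2
        = ((P⁻¹ * ((Y - X * B)ᵀ * (Y - X * B))).trace / (2*(n:ℝ)) + P.trace / 2) * s := by
      rw [← hss]; field_simp
    linarith
  -- tangency at Bhat
  have hMt : (Mᴴ * M) = (Mᵀ * M) := by rw [Matrix.conjTranspose_eq_transpose_of_trivial]
  have hMpsd : (Mᵀ * M).PosSemidef := hMt ▸ Matrix.posSemidef_conjTranspose_mul_self _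
  have hMM : Mᵀ * M = (n:ℝ) • (P * P) := by
    rw [hPP, smul_smul, mul_one_div_cancel hnne, one_smul]
  have heq : nuclearNorm M / s = (P⁻¹ * (Mᵀ * M)).trace / (2*(n:ℝ)) + P.trace / 2 := by
    have hsP : (s • P).PosSemidef := psd_smul hPpsd hs.le
    have hsq : (s • P) ^ 2 = Mᵀ * M := by
      rw [pow_two, Matrix.smul_mul, Matrix.mul_smul, smul_smul, hss, hMM]
    have hsqrt : hMpsd.sqrt = s • P := (hsP.eq_sqrt_of_sq_eq hMpsd hsq).symm
    have hnucM : nuclearNorm M = s * P.trace := by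
      have h0 : nuclearNorm M = hMpsd.sqrt.trace :=
        congrArg Matrix.trace (sqrt_congr hMt _ hMpsd)
      rw [h0, hsqrt, Matrix.trace_smul, smul_eq_mul]
    have hPinvMM : (P⁻¹ * (Mᵀ * M)).trace = (n:ℝ) * P.trace := by
      rw [hMM, Matrix.mul_smul, Matrix.trace_smul, smul_eq_mul, ← Matrix.mul_assoc,
        Matrix.nonsing_inv_mul _ hPdet, Matrix.one_mul]
    rw [hnucM, hPinvMM]
    field_simp
    ring
  -- minimality for the quadratic majorant
  have hqmin : ∀ B : Matrix (Fin p) (Fin q) ℝ,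
      (P⁻¹ * (Mᵀ * M)).trace / (2*(n:ℝ)) + lam0 * ∑ k, ∑ j, |Bhat k j|
        ≤ (P⁻¹ * ((Y - X * B)ᵀ * (Y - X * B))).trace / (2*(n:ℝ))
          + lam0 * ∑ k, ∑ j, |B k j| := by
    intro B
    have h1 := hmin B
    have h2 := hg B
    linarith [heq]
  -- pointwise scalar inequality
  have key : ∀ (k : Fin p) (j : Fin q) (t : ℝ),
      0 ≤ -(t * ((Xᵀ * M * P⁻¹) k j / n))
        + t^2 * ((P⁻¹ * ((X * Matrix.single k j (1:ℝ))ᵀ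
            * (X * Matrix.single k j (1:ℝ)))).trace / (2*(n:ℝ)))
        + lam0 * (|Bhat k j + t| - |Bhat k j|) := by
    intro k j t
    set E := Matrix.single k j (1:ℝ) with hEdef
    set A0 := X * E with hA0def
    have hN : Y - X * (Bhat + t • E) = M - t • A0 := by
      rw [hMdef, hA0def, Matrix.mul_add, Matrix.mul_smul, sub_add_eq_sub_sub]
    have hmm : (M - t • A0)ᵀ * (M - t • A0)
        = Mᵀ * M - t • (A0ᵀ * M) - t • (Mᵀ * A0) + (t*t) • (A0ᵀ * A0) := by
      simp only [Matrix.transpose_sub, Matrix.transpose_smul, Matrix.sub_mul, Matrix.mul_sub,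
        Matrix.smul_mul, Matrix.mul_smul, smul_sub, smul_smul]
      abel
    have lin2 : (P⁻¹ * (Mᵀ * A0)).trace = (Xᵀ * M * P⁻¹) k j := by
      have h1 : P⁻¹ * (Mᵀ * A0) = (P⁻¹ * Mᵀ * X) * E := by
        rw [hA0def]; simp [Matrix.mul_assoc]
      have h2 : P⁻¹ * Mᵀ * X = (Xᵀ * M * P⁻¹)ᵀ := by
        simp [Matrix.transpose_mul, hPit, Matrix.mul_assoc]
      rw [h1, trace_mul_stdBasisMatrix, h2, Matrix.transpose_apply]
    have lin1 : (P⁻¹ * (A0ᵀ * M)).trace = (Xᵀ * M * P⁻¹) k j := by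
      have h1 : (P⁻¹ * (A0ᵀ * M))ᵀ = Mᵀ * A0 * P⁻¹ := by
        simp [Matrix.transpose_mul, hPit, Matrix.mul_assoc]
      rw [← Matrix.trace_transpose (P⁻¹ * (A0ᵀ * M)), h1, Matrix.trace_mul_cycle,
        Matrix.mul_assoc, lin2]
    have hExp : (P⁻¹ * ((M - t • A0)ᵀ * (M - t • A0))).trace
        = (P⁻¹ * (Mᵀ * M)).trace - 2*t*((Xᵀ * M * P⁻¹) k j)
          + t^2 * (P⁻¹ * (A0ᵀ * A0)).trace := by
      rw [hmm]
      simp only [Matrix.mul_sub, Matrix.mul_add, Matrix.mul_smul, Matrix.trace_add,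
        Matrix.trace_sub, Matrix.trace_smul, smul_eq_mul]
      rw [lin1, lin2]
      ring
    have hq1 := hqmin (Bhat + t • E)
    rw [hN, hExp, penalty_sum Bhat k j t] at hq1
    have split : ((P⁻¹ * (Mᵀ * M)).trace - 2*t*((Xᵀ * M * P⁻¹) k j)
          + t^2 * (P⁻¹ * (A0ᵀ * A0)).trace) / (2*(n:ℝ))
        = (P⁻¹ * (Mᵀ * M)).trace / (2*(n:ℝ)) - t * ((Xᵀ * M * P⁻¹) k j / n)
          + t^2 * ((P⁻¹ * (A0ᵀ * A0)).trace / (2*(n:ℝ))) := by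
      field_simp
    rw [split] at hq1
    linarith
  -- conclusion
  refine ⟨(lam0⁻¹ * (1/(n:ℝ))) • (Xᵀ * M * P⁻¹), ?_, ?_, ?_⟩
  · intro k j
    have h := (scalar_kkt hlam0 (key k j)).1
    rw [Matrix.smul_apply, smul_eq_mul]
    have hA : (lam0⁻¹ * (1/(n:ℝ))) * ((Xᵀ * M * P⁻¹) k j)
        = lam0⁻¹ * ((Xᵀ * M * P⁻¹) k j / n) := by ring
    rw [hA, abs_mul, abs_inv, abs_of_pos hlam0]
    calc lam0⁻¹ * |(Xᵀ * M * P⁻¹) k j / ↑n| ≤ lam0⁻¹ * lam0 :=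
          mul_le_mul_of_nonneg_left h (inv_nonneg.mpr hlam0.le)
      _ = 1 := inv_mul_cancel₀ hlam0.ne'
  · intro k j hb
    have h := (scalar_kkt hlam0 (key k j)).2 hb
    rw [Matrix.smul_apply, smul_eq_mul]
    have hA : (lam0⁻¹ * (1/(n:ℝ))) * ((Xᵀ * M * P⁻¹) k j)
        = lam0⁻¹ * ((Xᵀ * M * P⁻¹) k j / n) := by ring
    rw [hA, h, ← mul_assoc, inv_mul_cancel₀ hlam0.ne', one_mul]
  · rw [smul_smul]
    congr 1
    field_simp
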